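/- (Generalized Theorem 2.) Let k ≥ 1, let a₁, …, a_k and C be nonzero integers, 0 < ε ≤ 1/(4 Σᵢ |aᵢ|), P ≥ 2k/ε², and let ρ : ℝ → ℝ be any function satisfying 0 ≤ ρ(t) ≤ 1 for all t, ρ(0) = 0, and ρ(t) = 1 whenever |t| ≥ ε. Define f_ρ : ℝ^{2k} → ℝ by f_ρ(x) = (C - Σ_{i=1}^k aᵢ xᵢ)² + P · Σ_{i=1}^k (1 - xᵢ - x_{i+k})² + Σ_{i=1}^{2k} ρ(xᵢ). Then there exists a subset S ⊆ {1, …, k} with Σ_{i∈S} aᵢ = C if and only if there exists x ∈ ℝ^{2k} with f_ρ(x) ≤ k; moreover, if no such subset exists, then f_ρ(x) ≥ k + 1/4 for all x ∈ ℝ^{2k}. -/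

import Mathlib

open BigOperators Finset

/-- The inclusion `{1, …, k} → {1, …, 2k}`, `i ↦ i`. -/
def lo (k : ℕ) (i : Fin k) : Fin (2 * k) :=
  ⟨i.1, by have := i.2; omega⟩

/-- The shifted inclusion `{1, …, k} → {1, …, 2k}`, `i ↦ i + k`. -/
def hi (k : ℕ) (i : Fin k) : Fin (2 * k) :=
  ⟨i.1 + k, by have := i.2; omega⟩

/-- The generalized objective of Theorem 2, with an arbitrary regularization
term `ρ`: `f_ρ(x) = (C - Σᵢ aᵢ xᵢ)² + P·Σᵢ (1 - xᵢ - x_{i+k})² + Σᵢ ρ(xᵢ)`. -/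
noncomputable def fgen (k : ℕ) (a : Fin k → ℤ) (C : ℤ) (P : ℝ) (ρ : ℝ → ℝ)
    (x : Fin (2 * k) → ℝ) : ℝ :=
  ((C : ℝ) - ∑ i : Fin k, (a i : ℝ) * x (lo k i)) ^ 2
    + P * ∑ i : Fin k, (1 - x (lo k i) - x (hi k i)) ^ 2
    + ∑ i : Fin (2 * k), ρ (x i)

/-- Splitting a sum over `Fin (2k)` into the `lo` and `hi` halves. -/
lemma sum_split (k : ℕ) (g : Fin (2 * k) → ℝ) :
    ∑ j, g j = ∑ i : Fin k, g (lo k i) + ∑ i : Fin k, g (hi k i) := by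
  have h2k : 2 * k = k + k := by ring
  have he : ∑ j : Fin (2 * k), g j = ∑ j : Fin (k + k), g (finCongr h2k.symm j) :=
    (Fintype.sum_equiv (finCongr h2k.symm) _ _ (fun _ => rfl)).symm
  rw [he, Fin.sum_univ_add]
  congr 1 <;>
    refine Finset.sum_congr rfl fun i _ => congrArg g (Fin.ext ?_) <;>
    simp [lo, hi, Nat.add_comm]

/-- Auxiliary numeric fact: if `P t² < 1/4` and `P ε² ≥ 2` then `t² < ε²`. -/
lemma aux_sq_lt (P ε t : ℝ) (hε2 : 0 < ε ^ 2) (h2 : 2 ≤ P * ε ^ 2)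
    (h1 : P * t ^ 2 < 1 / 4) : t ^ 2 < ε ^ 2 := by
  nlinarith [sq_nonneg t, mul_le_mul_of_nonneg_right h2 (sq_nonneg t),
    mul_lt_mul_of_pos_right h1 hε2]

set_option maxHeartbeats 1600000

/-- Generalized Theorem 2: for any regularization term `ρ` with `0 ≤ ρ ≤ 1`,
`ρ(0) = 0` and `ρ(t) = 1` for `|t| ≥ ε`, a good subset exists iff some `x`
has `f_ρ(x) ≤ k`; and if no good subset exists then `f_ρ ≥ k + 1/4`. -/
theorem generalized_theorem_two
    (k : ℕ) (hk : 1 ≤ k) (a : Fin k → ℤ) (C : ℤ)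
    (ha : ∀ i, a i ≠ 0) (hC : C ≠ 0) (ε P : ℝ)
    (hε : 0 < ε) (hε' : ε ≤ 1 / (4 * ∑ i, |(a i : ℝ)|)) (hP : 2 * k / ε ^ 2 ≤ P)
    (ρ : ℝ → ℝ) (hρ₀ : ∀ t, 0 ≤ ρ t) (hρ₁ : ∀ t, ρ t ≤ 1)
    (hρzero : ρ 0 = 0) (hρbig : ∀ t : ℝ, ε ≤ |t| → ρ t = 1) :
    ((∃ S : Finset (Fin k), ∑ i ∈ S, a i = C)
        ↔ ∃ x : Fin (2 * k) → ℝ, fgen k a C P ρ x ≤ k)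
      ∧ ((¬ ∃ S : Finset (Fin k), ∑ i ∈ S, a i = C)
        → ∀ x : Fin (2 * k) → ℝ, (k : ℝ) + 1 / 4 ≤ fgen k a C P ρ x) := by
  classical
  -- Basic facts
  have hsla : (1 : ℝ) ≤ ∑ i, |(a i : ℝ)| := by
    calc (1 : ℝ) ≤ (k : ℝ) := by exact_mod_cast hk
    _ = ∑ _i : Fin k, (1 : ℝ) := by simp
    _ ≤ ∑ i, |(a i : ℝ)| := by
        apply Finset.sum_le_sum
        intro i _
        exact_mod_cast Int.one_le_abs (ha i)
  have hsla0 : (0 : ℝ) < ∑ i, |(a i : ℝ)| := lt_of_lt_of_le one_pos hsla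
  have hε4 : ε ≤ 1 / 4 := by
    have : 1 / (4 * ∑ i, |(a i : ℝ)|) ≤ 1 / 4 := by
      apply one_div_le_one_div_of_le (by norm_num)
      nlinarith
    linarith
  have hεsla : 2 * ε * (∑ i, |(a i : ℝ)|) ≤ 1 / 2 := by
    have h2 := mul_le_mul_of_nonneg_right hε' (le_of_lt hsla0)
    have h3 : 1 / (4 * ∑ i, |(a i : ℝ)|) * (∑ i, |(a i : ℝ)|) = 1 / 4 := by
      field_simp
    rw [h3] at h2
    nlinarith
  have hε2 : (0 : ℝ) < ε ^ 2 := by positivity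
  have hk1 : (1 : ℝ) ≤ (k : ℝ) := by exact_mod_cast hk
  have hεP : 2 * (k : ℝ) ≤ P * ε ^ 2 := by
    have h1 : 2 * (k : ℝ) / ε ^ 2 * ε ^ 2 = 2 * (k : ℝ) := by field_simp
    nlinarith [mul_le_mul_of_nonneg_right hP (le_of_lt hε2)]
  have hP0 : (0 : ℝ) < P := by nlinarith
  -- The hard direction: no good subset implies fgen ≥ k + 1/4
  have hhard : (¬ ∃ S : Finset (Fin k), ∑ i ∈ S, a i = C)
      → ∀ x : Fin (2 * k) → ℝ, (k : ℝ) + 1 / 4 ≤ fgen k a C P ρ x := by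
    intro hno x
    by_contra hlt
    push_neg at hlt
    set A : ℝ := ((C : ℝ) - ∑ i : Fin k, (a i : ℝ) * x (lo k i)) ^ 2 with hA
    set Bs : ℝ := ∑ i : Fin k, (1 - x (lo k i) - x (hi k i)) ^ 2 with hBs
    set R : ℝ := ∑ j : Fin (2 * k), ρ (x j) with hR
    have hfgen : fgen k a C P ρ x = A + P * Bs + R := rfl
    have hA0 : 0 ≤ A := sq_nonneg _
    have hBs0 : 0 ≤ Bs := Finset.sum_nonneg fun i _ => sq_nonneg _
    have hR0 : 0 ≤ R := Finset.sum_nonneg fun j _ => hρ₀ _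
    have hterm : ∀ i : Fin k, (1 - x (lo k i) - x (hi k i)) ^ 2 ≤ Bs := by
      intro i
      rw [hBs]
      exact Finset.single_le_sum
        (f := fun j : Fin k => (1 - x (lo k j) - x (hi k j)) ^ 2)
        (fun j _ => sq_nonneg _) (Finset.mem_univ i)
    clear_value A Bs R
    by_cases hcase : ∃ i : Fin k, |x (lo k i)| < ε ∧ |x (hi k i)| < ε
    · -- some pair both small: penalty term is huge
      obtain ⟨i, h1, h2⟩ := hcase
      have h1' := abs_lt.mp h1
      have h2' := abs_lt.mp h2
      have hbig : (1 : ℝ) / 4 ≤ (1 - x (lo k i) - x (hi k i)) ^ 2 := by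
        have h5 : (1 : ℝ) / 2 ≤ 1 - x (lo k i) - x (hi k i) := by linarith
        have h6 := pow_le_pow_left₀ (by norm_num : (0:ℝ) ≤ 1/2) h5 2
        norm_num at h6
        linarith
      have hPB : 8 * (k : ℝ) ≤ P * Bs := by
        have hε16 : ε ^ 2 ≤ 1 / 16 := by nlinarith
        have hP32 : 32 * (k : ℝ) ≤ P := by
          have h7 := mul_le_mul_of_nonneg_left hε16 (le_of_lt hP0)
          linarith
        have hBs4 : (1 : ℝ) / 4 ≤ Bs := le_trans hbig (hterm i)
        have h8 := mul_le_mul_of_nonneg_left hBs4 (le_of_lt hP0)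
        linarith
      rw [hfgen] at hlt
      linarith
    · -- in every pair, one coordinate is large
      push_neg at hcase
      have hpair : ∀ i : Fin k, 1 ≤ ρ (x (lo k i)) + ρ (x (hi k i)) := by
        intro i
        by_cases h : |x (lo k i)| < ε
        · have := hρbig _ (hcase i h)
          have := hρ₀ (x (lo k i))
          linarith
        · push_neg at h
          have := hρbig _ h
          have := hρ₀ (x (hi k i))
          linarith
      have hRsplit : R = ∑ i : Fin k, (ρ (x (lo k i)) + ρ (x (hi k i))) := by
        rw [hR, sum_split k (fun j => ρ (x j)), ← Finset.sum_add_distrib]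
      have hRk : (k : ℝ) ≤ R := by
        rw [hRsplit]
        calc (k : ℝ) = ∑ _i : Fin k, (1 : ℝ) := by simp
        _ ≤ _ := Finset.sum_le_sum fun i _ => hpair i
      rw [hfgen] at hlt
      have hAB : A + P * Bs < 1 / 4 := by linarith
      have hPBs0 : 0 ≤ P * Bs := mul_nonneg (le_of_lt hP0) hBs0
      have hAlt : A < 1 / 4 := by linarith
      have hPBlt : P * Bs < 1 / 4 := by linarith
      -- each constraint term is small
      have hBper : ∀ i : Fin k, |1 - x (lo k i) - x (hi k i)| < ε := by
        intro i
        have ht := hterm i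
        have h1 : P * (1 - x (lo k i) - x (hi k i)) ^ 2 < 1 / 4 := by
          have := mul_le_mul_of_nonneg_left ht (le_of_lt hP0)
          linarith
        have hsq : (1 - x (lo k i) - x (hi k i)) ^ 2 < ε ^ 2 :=
          aux_sq_lt P ε _ hε2 (by linarith) h1
        exact abs_lt_of_sq_lt_sq hsq (le_of_lt hε)
      -- each pair sum of ρ is < 5/4
      have hpairlt : ∀ i : Fin k, ρ (x (lo k i)) + ρ (x (hi k i)) < 5 / 4 := by
        intro i
        have herase : ρ (x (lo k i)) + ρ (x (hi k i))
            + ∑ j ∈ Finset.univ.erase i, (ρ (x (lo k j)) + ρ (x (hi k j))) = R := by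
          rw [hRsplit]
          exact Finset.add_sum_erase Finset.univ
            (fun j : Fin k => ρ (x (lo k j)) + ρ (x (hi k j))) (Finset.mem_univ i)
        have hcard : ((Finset.univ.erase i).card : ℝ) = (k : ℝ) - 1 := by
          rw [Finset.card_erase_of_mem (Finset.mem_univ i), Finset.card_univ,
            Fintype.card_fin]
          push_cast [Nat.cast_sub hk]
          ring
        have hrest : (k : ℝ) - 1 ≤ ∑ j ∈ Finset.univ.erase i,
            (ρ (x (lo k j)) + ρ (x (hi k j))) := by
          calc (k : ℝ) - 1 = ∑ _j ∈ Finset.univ.erase i, (1 : ℝ) := by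
                rw [Finset.sum_const, nsmul_eq_mul, mul_one, hcard]
          _ ≤ _ := Finset.sum_le_sum fun j _ => hpair j
        linarith
      -- define the candidate subset
      set S : Finset (Fin k) := Finset.univ.filter (fun i => ε ≤ |x (lo k i)|) with hS
      have hnear : ∀ i : Fin k,
          (i ∈ S → |x (lo k i) - 1| ≤ 2 * ε) ∧ (i ∉ S → |x (lo k i)| ≤ 2 * ε) := by
        intro i
        constructor
        · intro hiS
          have hloε : ε ≤ |x (lo k i)| := (Finset.mem_filter.mp hiS).2
          have hρlo : ρ (x (lo k i)) = 1 := hρbig _ hloε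
          have hhiε : |x (hi k i)| < ε := by
            by_contra h
            push_neg at h
            have h1 := hρbig _ h
            have h2 := hpairlt i
            linarith
          have h1 := abs_lt.mp (hBper i)
          have h2 := abs_lt.mp hhiε
          rw [abs_le]
          constructor <;> linarith
        · intro hiS
          have h1 : ¬ ε ≤ |x (lo k i)| := by
            intro h
            exact hiS (Finset.mem_filter.mpr ⟨Finset.mem_univ i, h⟩)
          push_neg at h1
          have := abs_nonneg (x (lo k i))
          linarith
      clear_value S
      -- the rounding error estimate
      have hχ : ∀ i : Fin k, |(if i ∈ S then (1 : ℝ) else 0) - x (lo k i)| ≤ 2 * ε := by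
        intro i
        by_cases hiS : i ∈ S
        · have := (hnear i).1 hiS
          rw [if_pos hiS, abs_sub_comm]
          simpa using this
        · have := (hnear i).2 hiS
          rw [if_neg hiS]
          simpa using this
      have hrwS : (∑ i ∈ S, (a i : ℝ))
          = ∑ i : Fin k, (a i : ℝ) * (if i ∈ S then (1 : ℝ) else 0) := by
        rw [Finset.sum_congr rfl (fun i (_ : i ∈ Finset.univ) => by
          rw [mul_ite, mul_one, mul_zero])]
        rw [Finset.sum_ite_mem, Finset.univ_inter]
      have hTx : |(∑ i ∈ S, (a i : ℝ)) - ∑ i : Fin k, (a i : ℝ) * x (lo k i)| ≤ 1 / 2 := by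
        rw [hrwS, ← Finset.sum_sub_distrib]
        calc |∑ i : Fin k, ((a i : ℝ) * (if i ∈ S then (1 : ℝ) else 0)
                - (a i : ℝ) * x (lo k i))|
            ≤ ∑ i : Fin k, |(a i : ℝ) * (if i ∈ S then (1 : ℝ) else 0)
                - (a i : ℝ) * x (lo k i)| := Finset.abs_sum_le_sum_abs _ _
          _ ≤ ∑ i : Fin k, |(a i : ℝ)| * (2 * ε) := by
              apply Finset.sum_le_sum
              intro i _
              rw [← mul_sub, abs_mul]
              exact mul_le_mul_of_nonneg_left (hχ i) (abs_nonneg _)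
          _ = 2 * ε * ∑ i, |(a i : ℝ)| := by rw [← Finset.sum_mul]; ring
          _ ≤ 1 / 2 := hεsla
      have hCx : |(C : ℝ) - ∑ i : Fin k, (a i : ℝ) * x (lo k i)| < 1 / 2 := by
        have hsq : ((C : ℝ) - ∑ i : Fin k, (a i : ℝ) * x (lo k i)) ^ 2 < (1 / 2) ^ 2 := by
          rw [← hA]
          norm_num
          linarith
        exact abs_lt_of_sq_lt_sq hsq (by norm_num)
      have htri := abs_sub_le ((C : ℝ)) (∑ i : Fin k, (a i : ℝ) * x (lo k i))
        (∑ i ∈ S, (a i : ℝ))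
      rw [abs_sub_comm (∑ i : Fin k, (a i : ℝ) * x (lo k i))] at htri
      have hint : |(C : ℝ) - (∑ i ∈ S, (a i : ℝ))| < 1 := by linarith
      apply hno
      refine ⟨S, ?_⟩
      have hm : C - ∑ i ∈ S, a i = 0 := by
        by_contra hm
        have h1 : (1 : ℤ) ≤ |C - ∑ i ∈ S, a i| := Int.one_le_abs hm
        have h2 : (1 : ℝ) ≤ |(C : ℝ) - ∑ i ∈ S, (a i : ℝ)| := by exact_mod_cast h1
        linarith
      linarith [hm]
  -- assemble the two parts
  constructor
  · constructor
    · -- forward: construct x from the good subset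
      rintro ⟨S, hSC⟩
      set s : Fin k → ℝ := fun i => if i ∈ S then 1 else 0 with hs
      set x : Fin (2 * k) → ℝ :=
        fun j => if h : j.1 < k then s ⟨j.1, h⟩ else 1 - s ⟨j.1 - k, by omega⟩ with hx
      refine ⟨x, ?_⟩
      have hxlo : ∀ i : Fin k, x (lo k i) = s i := by
        intro i
        simp only [hx, lo]
        rw [dif_pos i.2]
      have hxhi : ∀ i : Fin k, x (hi k i) = 1 - s i := by
        intro i
        have h : ¬ (hi k i).1 < k := by simp [hi]
        simp only [hx, dif_neg h]
        congr 1
        exact congrArg s (Fin.ext (by simp [hi]))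
      have h1 : ∑ i : Fin k, (a i : ℝ) * x (lo k i) = (C : ℝ) := by
        simp only [hxlo, hs]
        rw [Finset.sum_congr rfl (fun i (_ : i ∈ Finset.univ) => by
          rw [mul_ite, mul_one, mul_zero])]
        rw [Finset.sum_ite_mem, Finset.univ_inter]
        exact_mod_cast hSC
      have h2 : ∑ i : Fin k, (1 - x (lo k i) - x (hi k i)) ^ 2 = 0 := by
        apply Finset.sum_eq_zero
        intro i _
        rw [hxlo, hxhi]
        ring
      have h3 : ∑ j : Fin (2 * k), ρ (x j) ≤ (k : ℝ) := by
        rw [sum_split k (fun j => ρ (x j))]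
        calc ∑ i : Fin k, ρ (x (lo k i)) + ∑ i : Fin k, ρ (x (hi k i))
            = ∑ i : Fin k, (ρ (x (lo k i)) + ρ (x (hi k i))) := by
              rw [Finset.sum_add_distrib]
        _ ≤ ∑ _i : Fin k, (1 : ℝ) := by
              apply Finset.sum_le_sum
              intro i _
              rw [hxlo, hxhi, hs]
              by_cases hiS : i ∈ S <;> simp [hiS, hρzero] <;> exact hρ₁ 1
        _ = (k : ℝ) := by simp
      rw [fgen, h1, h2]
      simpa using h3
    · rintro ⟨x, hx⟩
      by_contra hno
      have := hhard hno x
      linarith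
  · exact hhard
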